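/- Corollary (shift covariance of the energy function): with the notation of the previous item, the energy function E_Y(z) := det[v_i^{−j}(v_i+1)^{y_j+j}]_{i,j=1}^N / det[v_i^{−j}]_{i,j=1}^N, evaluated on the right Bethe roots {v_1,…,v_N} = R_z, satisfies E_{Ŷ}(z) = E_Y(z) · (−1)^{k(N−k)} z^{−kL} ∏_{v∈R_z} v^k (v+1)^{−k+c}. -/

import Mathlib

open Complex


open Fin.NatCast in
lemma finRotate_pow_apply (n k : ℕ) : ∀ j : Fin (n+1),
    ((finRotate (n+1))^k) j = j + (k : Fin (n+1)) := by
  induction k with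
  | zero => intro j; simp
  | succ k ih =>
    intro j
    rw [pow_succ, Equiv.Perm.mul_apply, finRotate_succ_apply, ih]
    push_cast
    abel

lemma prodif (c : ℂ) (t m : ℕ) (ht : t ≤ m) :
    ∏ i ∈ Finset.range m, (if i < t then (1:ℂ) else c) = c ^ (m - t) := by
  induction m with
  | zero => simp
  | succ m ih =>
    rcases Nat.lt_or_ge m t with h | h
    · have ht' : t = m + 1 := by omega
      subst ht'
      rw [Finset.prod_congr rfl (fun i hi => if_pos (Finset.mem_range.mp hi))]
      simp
    · rw [Finset.prod_range_succ, ih h, if_neg (by omega)]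
      rw [show m + 1 - t = (m - t) + 1 by omega, pow_succ]

lemma helper2 {a b : ℂ} (ha : a ≠ 0) (hb : b ≠ 0) (p1 q1 p2 q2 P Q : ℤ)
    (hP : p1 + p2 = P) (hQ : q1 + q2 = Q) :
    (a^p1 * b^q1) * (a^p2 * b^q2) = a^P * b^Q := by
  subst hP hQ; rw [zpow_add₀ ha, zpow_add₀ hb]; ring

lemma helper3 {a b : ℂ} (ha : a ≠ 0) (hb : b ≠ 0) (p1 q1 p2 q2 p3 q3 P Q : ℤ)
    (hP : p1 + p2 + p3 = P) (hQ : q1 + q2 + q3 = Q) :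
    (a^p1 * b^q1) * ((a^p2 * b^q2) * (a^p3 * b^q3)) = a^P * b^Q := by
  subst hP hQ
  rw [zpow_add₀ ha, zpow_add₀ ha, zpow_add₀ hb, zpow_add₀ hb]; ring

lemma negpow (k N : ℕ) (hN : 1 ≤ N) (hkN : k ≤ N) :
    ((-1:ℂ))^((N-1)*k) = (-1) ^ (k*(N-k)) := by
  have hpar : Even ((N-1)*k) ↔ Even (k*(N-k)) := by
    rw [Nat.even_mul, Nat.even_mul, Nat.even_sub hkN, Nat.even_sub hN]
    simp only [Nat.even_iff, Nat.one_mod]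
    omega
  rcases Nat.even_or_odd ((N-1)*k) with h | h
  · rw [h.neg_one_pow, (hpar.mp h).neg_one_pow]
  · rw [h.neg_one_pow, (Nat.not_even_iff_odd.mp
      (fun he => (Nat.not_odd_iff_even.mpr (hpar.mpr he)) h)).neg_one_pow]

/-- shift covariance of the energy function: with 0-based indices
(`y j` = paper's `y_{j+1}`, entries `v_i^{−j−1}(v_i+1)^{y_j+j+1}`), the energy function
`E_Y(z) = det[v_i^{−j}(v_i+1)^{y_j+j}]/det[v_i^{−j}]` evaluated on the `N` distinct right
Bethe roots `R_z = {v_1,…,v_N}` satisfies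
`E_{Ŷ}(z) = E_Y(z) · (−1)^{k(N−k)} z^{−kL} ∏_{v∈R_z} v^k (v+1)^{−k+c}`
for the `(k,c)`-shift `Ŷ` of `Y ∈ X_N(L)`. -/
theorem statement15 (N L : ℕ) (hN : 0 < N) (hNL : N < L) (z : ℂ) (hz : z ≠ 0)
    (ρ : ℝ) (hρ : ρ = (N : ℝ) / L) (hzr : ‖z‖ < ρ ^ ρ * (1 - ρ) ^ (1 - ρ))
    (v : Fin N → ℂ) (hinj : Function.Injective v)
    (hv0 : ∀ i, v i ≠ 0) (hv1 : ∀ i, v i ≠ -1)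
    (hre : ∀ i, -ρ < (v i).re)
    (hBethe : ∀ i, (v i) ^ N * (v i + 1) ^ (L - N) = z ^ L)
    (y : Fin N → ℤ) (hYdec : ∀ i j : Fin N, i < j → y j < y i)
    (hYper : y ⟨0, hN⟩ < y ⟨N - 1, by omega⟩ + L)
    (k : ℕ) (hk1 : 1 ≤ k) (hkN : k ≤ N) (c : ℤ) :
    let yhat : Fin N → ℤ := fun i =>
      if h : (i : ℕ) + k < N then y ⟨(i : ℕ) + k, h⟩ + c
      else y ⟨(i : ℕ) + k - N, by have := i.isLt; omega⟩ - L + c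
    let E : (Fin N → ℤ) → ℂ := fun Y =>
      Matrix.det (Matrix.of fun i j : Fin N =>
          (v i) ^ (-(j : ℤ) - 1) * (v i + 1) ^ (Y j + (j : ℤ) + 1)) /
        Matrix.det (Matrix.of fun i j : Fin N => (v i) ^ (-(j : ℤ) - 1))
    E yhat = E y * (-1) ^ (k * (N - k)) * z ^ (-((k * L : ℕ) : ℤ)) *
      ∏ i : Fin N, (v i) ^ k * (v i + 1) ^ ((c : ℤ) - k) := by
  
  intro yhat E
  obtain ⟨n, rfl⟩ : ∃ n, N = n + 1 := ⟨N - 1, by omega⟩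
  have hu0 : ∀ i, v i + 1 ≠ 0 := fun i h => hv1 i (eq_neg_of_add_eq_zero_left h)
  set σ : Equiv.Perm (Fin (n+1)) := (finRotate (n+1))^k with hσ
  have hσval : ∀ j : Fin (n+1), (σ j).val = ((j:ℕ) + k) % (n+1) := by
    intro j
    rw [hσ, finRotate_pow_apply, Fin.add_def, Fin.val_natCast]
    conv_rhs => rw [Nat.add_mod, Nat.mod_eq_of_lt j.isLt]
  set A : Matrix (Fin (n+1)) (Fin (n+1)) ℂ :=
    Matrix.of fun i j : Fin (n+1) =>
      (v i) ^ (-(j : ℤ) - 1) * (v i + 1) ^ (y j + (j : ℤ) + 1) with hA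
  have hAhat : (Matrix.of fun i j : Fin (n+1) =>
      (v i) ^ (-(j : ℤ) - 1) * (v i + 1) ^ (yhat j + (j : ℤ) + 1)) =
      Matrix.of fun i j : Fin (n+1) =>
        ((v i)^k * (v i + 1)^((c:ℤ)-k)) *
          ((if (j:ℕ)+k < n+1 then (1:ℂ) else (z^L)⁻¹) * A i (σ j)) := by
    ext i j
    simp only [Matrix.of_apply, hA]
    by_cases h : (j:ℕ) + k < n + 1
    · have hσj : σ j = ⟨(j:ℕ)+k, h⟩ := Fin.ext (by rw [hσval]; exact Nat.mod_eq_of_lt h)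
      have hyj : yhat j = y ⟨(j:ℕ)+k, h⟩ + c := dif_pos h
      rw [hσj, hyj, if_pos h, one_mul, ← zpow_natCast (v i) k]
      exact (helper2 (hv0 i) (hu0 i) _ _ _ _ _ _
        (by simp only [Fin.val_mk]; push_cast; ring)
        (by simp only [Fin.val_mk]; push_cast; ring)).symm
    · have hjlt := j.isLt
      set j' : Fin (n+1) := ⟨(j:ℕ)+k-(n+1), by omega⟩ with hj'
      have hσj : σ j = j' := Fin.ext (by
        rw [hσval, Nat.mod_eq_sub_mod (by omega), Nat.mod_eq_of_lt (by omega)])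
      have hyj : yhat j = y j' - L + c := dif_neg h
      have hzL : ((z:ℂ)^L)⁻¹ =
          (v i)^(-((n+1:ℕ):ℤ)) * (v i + 1)^(-((L-(n+1):ℕ):ℤ)) := by
        rw [← hBethe i, mul_inv, ← zpow_natCast (v i), ← zpow_natCast (v i + 1),
          ← zpow_neg, ← zpow_neg]
      rw [hσj, hyj, if_neg h, hzL, ← zpow_natCast (v i) k]
      exact (helper3 (hv0 i) (hu0 i) _ _ _ _ _ _ _ _
        (by simp only [hj', Fin.val_mk]; push_cast [Nat.sub_sub]; omega)
        (by simp only [hj', Fin.val_mk]; push_cast [Nat.sub_sub]; omega)).symm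
  show (Matrix.of fun i j : Fin (n+1) =>
      (v i) ^ (-(j : ℤ) - 1) * (v i + 1) ^ (yhat j + (j : ℤ) + 1)).det /
      (Matrix.of fun i j : Fin (n+1) => (v i) ^ (-(j : ℤ) - 1)).det =
    (A.det / (Matrix.of fun i j : Fin (n+1) => (v i) ^ (-(j : ℤ) - 1)).det) *
      (-1) ^ (k * (n + 1 - k)) * z ^ (-((k * L : ℕ) : ℤ)) *
      ∏ i : Fin (n+1), (v i) ^ k * (v i + 1) ^ ((c : ℤ) - k)
  rw [hAhat]
  have h1 : (Matrix.of fun i j : Fin (n+1) =>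
      ((v i)^k * (v i + 1)^((c:ℤ)-k)) *
        ((if (j:ℕ)+k < n+1 then (1:ℂ) else (z^L)⁻¹) * A i (σ j))).det =
      (∏ i : Fin (n+1), (v i)^k * (v i + 1)^((c:ℤ)-k)) *
        (Matrix.of fun i j : Fin (n+1) =>
          (if (j:ℕ)+k < n+1 then (1:ℂ) else (z^L)⁻¹) * A i (σ j)).det :=
    Matrix.det_mul_column _ _
  have h2 : (Matrix.of fun i j : Fin (n+1) =>
      (if (j:ℕ)+k < n+1 then (1:ℂ) else (z^L)⁻¹) * A i (σ j)).det =
      (∏ j : Fin (n+1), (if (j:ℕ)+k < n+1 then (1:ℂ) else (z^L)⁻¹)) *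
        (A.submatrix id σ).det :=
    Matrix.det_mul_row _ _
  have h3 : (A.submatrix id σ).det = ((Equiv.Perm.sign σ : ℤ) : ℂ) * A.det :=
    Matrix.det_permute' σ A
  have hsign : ((Equiv.Perm.sign σ : ℤ) : ℂ) = (-1) ^ (k * (n + 1 - k)) := by
    rw [hσ, map_pow, sign_finRotate]
    push_cast
    rw [← pow_mul]
    exact negpow k (n+1) (by omega) hkN
  have hwprod : (∏ j : Fin (n+1), (if (j:ℕ)+k < n+1 then (1:ℂ) else (z^L)⁻¹)) =
      ((z^L)⁻¹) ^ k := by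
    rw [Fin.prod_univ_eq_prod_range (fun i => if i + k < n+1 then (1:ℂ) else (z^L)⁻¹) (n+1)]
    rw [Finset.prod_congr rfl (fun i _ => if_congr (by omega : (i + k < n+1) ↔ (i < n+1-k)) rfl rfl)]
    rw [prodif _ _ _ (by omega)]
    congr 1
    omega
  have hzfac : ((z^L)⁻¹ : ℂ)^k = z ^ (-((k*L:ℕ):ℤ)) := by
    rw [inv_pow, ← pow_mul, zpow_neg, zpow_natCast, mul_comm]
  rw [h1, h2, h3, hsign, hwprod, ← hzfac]
  ring
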